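/- Fix β > 0 and β̂ > 0. Then the infimum, over β̃ ∈ (0, β], of the Kullback–Leibler divergence from the exponential distribution with mean β̃ (rate 1/β̃) to the exponential distribution with mean β̂ (rate 1/β̂), equals ENNReal.ofReal (Real.log β̂ + β / β̂ - Real.log β - 1) if β̂ > β, and equals 0 if β̂ ≤ β. -/

import Mathlib

open MeasureTheory
open scoped ENNReal

open Classical in
/-- Kullback-Leibler divergence between two measures (as in Mathlib's `InformationTheory.klDiv`). -/
noncomputable def klDiv {α : Type*} [MeasurableSpace α] (μ ν : Measure α) : ℝ≥0∞ :=
  if μ ≪ ν ∧ Integrable (llr μ ν) μ then ENNReal.ofReal (∫ x, llr μ ν x ∂μ) else ∞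


open Real Set ProbabilityTheory

lemma exponentialPDFReal_eq (r x : ℝ) :
    exponentialPDFReal r x = if 0 ≤ x then r * exp (-(r * x)) else 0 := by
  rw [exponentialPDFReal, gammaPDFReal]
  simp only [rpow_one, Real.Gamma_one, div_one, sub_self, rpow_zero, mul_one]

lemma aux_integrableOn (a : ℝ) (ha : 0 < a) :
    IntegrableOn (fun x : ℝ ↦ x * (a * exp (-(a * x)))) (Ici 0) := by
  rw [integrableOn_Ici_iff_integrableOn_Ioi]
  have h := integrableOn_rpow_mul_exp_neg_mul_rpow (s := 1) (p := 1) (by norm_num) zero_lt_one ha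
  refine IntegrableOn.congr_fun (h.const_mul a) (fun x hx ↦ by rw [Real.rpow_one]; ring) measurableSet_Ioi

lemma integrable_id_expMeasure (a : ℝ) (ha : 0 < a) :
    Integrable (fun x ↦ x) (expMeasure a) := by
  have hd : expMeasure a
      = volume.withDensity (fun x ↦ ((exponentialPDFReal a x).toNNReal : ℝ≥0∞)) := rfl
  rw [hd, integrable_withDensity_iff_integrable_smul
    (measurable_exponentialPDFReal a).real_toNNReal]
  have heq : (fun x : ℝ ↦ (exponentialPDFReal a x).toNNReal • x)
      = Set.indicator (Ici 0) (fun x ↦ x * (a * exp (-(a * x)))) := by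
    funext x
    rw [NNReal.smul_def, Real.coe_toNNReal _ (exponentialPDFReal_nonneg ha x),
      exponentialPDFReal_eq]
    by_cases hx : 0 ≤ x <;> simp [Set.indicator, hx, mul_comm]
  rw [heq, integrable_indicator_iff measurableSet_Ici]
  exact aux_integrableOn a ha

lemma integral_id_expMeasure (a : ℝ) (ha : 0 < a) :
    ∫ x, x ∂(expMeasure a) = 1 / a := by
  have hd : expMeasure a
      = volume.withDensity (fun x ↦ ((exponentialPDFReal a x).toNNReal : ℝ≥0∞)) := rfl
  rw [hd, integral_withDensity_eq_integral_smul
    (measurable_exponentialPDFReal a).real_toNNReal]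
  have heq : (fun x : ℝ ↦ (exponentialPDFReal a x).toNNReal • x)
      = Set.indicator (Ici 0) (fun x ↦ x * (a * exp (-(a * x)))) := by
    funext x
    rw [NNReal.smul_def, Real.coe_toNNReal _ (exponentialPDFReal_nonneg ha x),
      exponentialPDFReal_eq]
    by_cases hx : 0 ≤ x <;> simp [Set.indicator, hx, mul_comm]
  rw [heq, integral_indicator measurableSet_Ici, integral_Ici_eq_integral_Ioi]
  have h2 := integral_rpow_mul_exp_neg_mul_Ioi (a := 2) (r := a) (by norm_num) ha
  have : ∫ x in Ioi (0:ℝ), x * (a * exp (-(a * x)))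
      = a * ∫ t in Ioi (0:ℝ), t ^ ((2:ℝ) - 1) * exp (-(a * t)) := by
    rw [← integral_const_mul]
    refine setIntegral_congr_fun measurableSet_Ioi (fun x hx ↦ ?_)
    norm_num [Real.rpow_one]
    ring
  rw [this, h2, Real.Gamma_two]
  rw [show ((2:ℝ) = ((2:ℕ):ℝ)) by norm_num, Real.rpow_natCast]
  field_simp

lemma klDiv_expMeasure (a b : ℝ) (ha : 0 < a) (hb : 0 < b) :
    klDiv (expMeasure a) (expMeasure b)
      = ENNReal.ofReal (Real.log a - Real.log b + b / a - 1) := by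
  have hPa := isProbabilityMeasure_expMeasure ha
  have hPb := isProbabilityMeasure_expMeasure hb
  set h : ℝ → ℝ≥0∞ := fun x ↦ ENNReal.ofReal (a / b * exp (-((a - b) * x))) with hh
  have hmeas : Measurable h := by
    apply Measurable.ennreal_ofReal
    exact (((measurable_id.const_mul (a - b)).neg).exp).const_mul _
  have hμ : expMeasure a = (expMeasure b).withDensity h := by
    show volume.withDensity (exponentialPDF a)
        = (volume.withDensity (exponentialPDF b)).withDensity h
    have hmb : Measurable (exponentialPDF b) := (measurable_exponentialPDFReal b).ennreal_ofReal
    rw [← withDensity_mul _ hmb hmeas]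
    congr 1
    funext x
    simp only [Pi.mul_apply, exponentialPDF_eq, hh]
    by_cases hx : 0 ≤ x
    · simp only [if_pos hx]
      rw [← ENNReal.ofReal_mul (by positivity)]
      rw [show b * rexp (-(b * x)) * (a / b * rexp (-((a - b) * x)))
          = (b * (a / b)) * (rexp (-(b * x)) * rexp (-((a - b) * x))) by ring,
        ← Real.exp_add, mul_div_cancel₀ a hb.ne']
      ring_nf
    · simp [if_neg hx]
  have hac : expMeasure a ≪ expMeasure b := by
    rw [hμ]; exact withDensity_absolutelyContinuous _ _
  have hrn : (expMeasure a).rnDeriv (expMeasure b) =ᵐ[expMeasure b] h := by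
    conv_lhs => rw [hμ]
    exact Measure.rnDeriv_withDensity _ hmeas
  have hrnμ : (expMeasure a).rnDeriv (expMeasure b) =ᵐ[expMeasure a] h := hac.ae_eq hrn
  have h_llr : llr (expMeasure a) (expMeasure b)
      =ᵐ[expMeasure a] fun x ↦ (Real.log a - Real.log b) + (b - a) * x := by
    filter_upwards [hrnμ] with x hx
    rw [llr, hx, hh, ENNReal.toReal_ofReal (by positivity),
      Real.log_mul (by positivity) (Real.exp_pos _).ne', Real.log_exp,
      Real.log_div ha.ne' hb.ne']
    ring
  have hint' : Integrable (fun x ↦ (Real.log a - Real.log b) + (b - a) * x) (expMeasure a) :=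
    (integrable_const _).add ((integrable_id_expMeasure a ha).const_mul _)
  have hint : Integrable (llr (expMeasure a) (expMeasure b)) (expMeasure a) :=
    hint'.congr h_llr.symm
  rw [klDiv, if_pos ⟨hac, hint⟩, integral_congr_ae h_llr]
  rw [integral_add (integrable_const _) ((integrable_id_expMeasure a ha).const_mul _),
    integral_const, integral_const_mul, integral_id_expMeasure a ha]
  congr 1
  simp only [measure_univ, probReal_univ, ENNReal.toReal_one, smul_eq_mul, one_mul]
  field_simp
  ring

theorem iInf_setKL_expMeasure (β βhat : ℝ) (hβ : 0 < β) (hβhat : 0 < βhat) :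
    ⨅ βtilde ∈ Set.Ioc (0 : ℝ) β,
        klDiv (ProbabilityTheory.expMeasure (1 / βtilde))
          (ProbabilityTheory.expMeasure (1 / βhat)) =
      if β < βhat then ENNReal.ofReal (Real.log βhat + β / βhat - Real.log β - 1)
      else 0 := by
  have hkl : ∀ βt ∈ Set.Ioc (0 : ℝ) β,
      klDiv (expMeasure (1 / βt)) (expMeasure (1 / βhat))
        = ENNReal.ofReal (Real.log βhat - Real.log βt + βt / βhat - 1) := by
    intro βt hβt
    obtain ⟨h0, -⟩ := hβt
    rw [klDiv_expMeasure _ _ (by positivity) (by positivity)]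
    congr 1
    rw [one_div, one_div, Real.log_inv, Real.log_inv,
      show (βhat⁻¹ / βt⁻¹ : ℝ) = βt / βhat by
        field_simp]
    ring
  by_cases hlt : β < βhat
  · rw [if_pos hlt]
    apply le_antisymm
    · refine (iInf₂_le β ⟨hβ, le_rfl⟩).trans_eq ?_
      rw [hkl β ⟨hβ, le_rfl⟩]
      congr 1
      ring
    · refine le_iInf₂ fun βt hβt ↦ ?_
      rw [hkl βt hβt]
      apply ENNReal.ofReal_le_ofReal
      obtain ⟨h0, hle⟩ := hβt
      have h1 : Real.log βt - Real.log β ≤ βt / β - 1 := by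
        have := Real.log_le_sub_one_of_pos (show (0:ℝ) < βt / β by positivity)
        rwa [Real.log_div h0.ne' hβ.ne'] at this
      have h2 : βt / β - 1 ≤ (βt - β) / βhat := by
        rw [div_sub_one hβ.ne', div_le_div_iff₀ hβ hβhat]
        nlinarith
      have h3 : (βt - β) / βhat = βt / βhat - β / βhat := by ring
      linarith [h1.trans h2, h3 ▸ h1.trans h2]
  · rw [if_neg hlt]
    push_neg at hlt
    apply le_antisymm
    · refine (iInf₂_le βhat ⟨hβhat, hlt⟩).trans_eq ?_
      rw [hkl βhat ⟨hβhat, hlt⟩, div_self hβhat.ne']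
      simp
    · exact zero_le
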